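/- A linear map Λ: M_n(ℂ) → M_n(ℂ) that is n-positive is completely positive, i.e., 1_k ⊗ Λ is positive for all k ≥ 1. -/

import Mathlib

open scoped BigOperators ComplexOrder

open scoped InnerProductSpace in
lemma herm_aux {m : Type*} [Fintype m] [DecidableEq m] (B : Matrix m m ℂ)
    (h : ∀ x : m → ℂ, 0 ≤ dotProduct (star x) (B.mulVec x)) : B.IsHermitian := by
  rw [Matrix.isHermitian_iff_isSymmetric, LinearMap.isSymmetric_iff_inner_map_self_real]
  intro v
  set w : m → ℂ := WithLp.equiv 2 (m → ℂ) v with hw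
  have h1 : ⟪Matrix.toEuclideanLin B v, v⟫_ℂ
      = starRingEnd ℂ (dotProduct (star w) (B.mulVec w)) := by
    rw [EuclideanSpace.inner_eq_star_dotProduct]
    simp [dotProduct, map_sum, mul_comm]
    rfl
  have h2 := h w
  have h3 : starRingEnd ℂ (dotProduct (star w) (B.mulVec w))
      = dotProduct (star w) (B.mulVec w) := by
    rw [Complex.conj_eq_iff_im]
    rw [Complex.le_def] at h2
    exact h2.2.symm
  rw [h1, h3]
  exact h3

lemma sum4_swap {k n : ℕ} (f : Fin k → Fin k → Fin n → Fin n → ℂ) :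
    ∑ a : Fin n, ∑ b : Fin n, ∑ p : Fin k, ∑ q : Fin k, f p q a b
      = ∑ p : Fin k, ∑ a : Fin n, ∑ q : Fin k, ∑ b : Fin n, f p q a b := by
  have h1 : ∀ a : Fin n, ∑ b : Fin n, ∑ p : Fin k, ∑ q : Fin k, f p q a b
      = ∑ p : Fin k, ∑ b : Fin n, ∑ q : Fin k, f p q a b := fun a => Finset.sum_comm
  simp_rw [h1]
  rw [Finset.sum_comm]
  exact Finset.sum_congr rfl fun p _ => Finset.sum_congr rfl fun a _ => Finset.sum_comm

/-- The ampliation `1_k ⊗ Λ` of a linear map `Λ : M_n(ℂ) → M_n(ℂ)`, acting on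
matrices on `ℂ^k ⊗ ℂ^n` blockwise. -/
def amp (k n : ℕ)
    (Λ' : Matrix (Fin n) (Fin n) ℂ →ₗ[ℂ] Matrix (Fin n) (Fin n) ℂ)
    (M : Matrix (Fin k × Fin n) (Fin k × Fin n) ℂ) :
    Matrix (Fin k × Fin n) (Fin k × Fin n) ℂ :=
  Matrix.of fun p q => Λ' (Matrix.of fun r s => M (p.1, r) (q.1, s)) p.2 q.2

open Matrix

/-- A linear map `Λ : M_n(ℂ) → M_n(ℂ)` that is `n`-positive is
completely positive: `1_k ⊗ Λ` is positive for all `k ≥ 1`. -/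
theorem stmt_16 (n : ℕ)
    (Λ' : Matrix (Fin n) (Fin n) ℂ →ₗ[ℂ] Matrix (Fin n) (Fin n) ℂ)
    (hnpos : ∀ M : Matrix (Fin n × Fin n) (Fin n × Fin n) ℂ,
        M.PosSemidef → (amp n n Λ' M).PosSemidef) :
    ∀ k : ℕ, 1 ≤ k → ∀ M : Matrix (Fin k × Fin n) (Fin k × Fin n) ℂ,
      M.PosSemidef → (amp k n Λ' M).PosSemidef := by
  intro k _ M hM
  have key : ∀ x : Fin k × Fin n → ℂ,
      0 ≤ dotProduct (star x) ((amp k n Λ' M).mulVec x) := by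
    intro x
    set A : Matrix (Fin k × Fin n) (Fin n × Fin n) ℂ :=
      Matrix.of fun pr ar => if pr.2 = ar.2 then x (pr.1, ar.1) else 0 with hA
    have hN : (Aᴴ * M * A).PosSemidef := hM.conjTranspose_mul_mul_same A
    have hampN := hnpos _ hN
    set z : Fin n × Fin n → ℂ := fun ar => if ar.1 = ar.2 then 1 else 0 with hz
    have h0 := hampN.dotProduct_mulVec_nonneg z
    have hentry : ∀ (a b r s : Fin n), (Aᴴ * M * A) (a, r) (b, s)
        = ∑ p : Fin k, ∑ q : Fin k,
            starRingEnd ℂ (x (p, a)) * x (q, b) * M (p, r) (q, s) := by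
      intro a b r s
      simp [Matrix.mul_apply, Matrix.conjTranspose_apply, Fintype.sum_prod_type, hA,
        apply_ite (starRingEnd ℂ), ite_mul, mul_ite, mul_zero, zero_mul, Finset.mul_sum,
        Finset.sum_ite_eq, Finset.sum_ite_eq']
      simp_rw [Finset.sum_mul]
      rw [Finset.sum_comm]
      exact Finset.sum_congr rfl fun p _ => Finset.sum_congr rfl fun q _ => by ring
    have hamp : ∀ (a b r s : Fin n), amp n n Λ' (Aᴴ * M * A) (a, r) (b, s)
        = ∑ p : Fin k, ∑ q : Fin k, starRingEnd ℂ (x (p, a)) * x (q, b) *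
            Λ' (Matrix.of fun r' s' => M (p, r') (q, s')) r s := by
      intro a b r s
      have hblk : (Matrix.of fun r' s' => (Aᴴ * M * A) (a, r') (b, s'))
          = ∑ p : Fin k, ∑ q : Fin k, (starRingEnd ℂ (x (p, a)) * x (q, b)) •
              (Matrix.of fun r' s' => M (p, r') (q, s')) := by
        ext r' s'
        simp [Matrix.sum_apply, hentry a b r' s']
      show Λ' (Matrix.of fun r' s' => (Aᴴ * M * A) (a, r') (b, s')) r s = _
      rw [hblk, map_sum]
      simp only [map_sum, Matrix.sum_apply]
      refine Finset.sum_congr rfl fun p _ => Finset.sum_congr rfl fun q _ => ?_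
      rw [LinearMap.map_smul, Matrix.smul_apply, smul_eq_mul]
    have lhs : dotProduct (star z) ((amp n n Λ' (Aᴴ * M * A)).mulVec z)
        = ∑ a : Fin n, ∑ b : Fin n, ∑ p : Fin k, ∑ q : Fin k,
            starRingEnd ℂ (x (p, a)) * x (q, b) *
              Λ' (Matrix.of fun r' s' => M (p, r') (q, s')) a b := by
      simp only [dotProduct, Matrix.mulVec, Pi.star_apply, hz, Fintype.sum_prod_type]
      simp [apply_ite (starRingEnd ℂ), ite_mul, mul_ite, mul_zero, zero_mul, mul_one, one_mul,
        Finset.sum_ite_eq, Finset.sum_ite_eq', hamp]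
    have rhs : dotProduct (star x) ((amp k n Λ' M).mulVec x)
        = ∑ p : Fin k, ∑ a : Fin n, ∑ q : Fin k, ∑ b : Fin n,
            starRingEnd ℂ (x (p, a)) * x (q, b) *
              Λ' (Matrix.of fun r' s' => M (p, r') (q, s')) a b := by
      simp only [dotProduct, Matrix.mulVec, Pi.star_apply, Fintype.sum_prod_type, amp,
        Matrix.of_apply, Finset.mul_sum, Complex.star_def]
      exact Finset.sum_congr rfl fun p _ => Finset.sum_congr rfl fun a _ =>
        Finset.sum_congr rfl fun q _ => Finset.sum_congr rfl fun b _ => by ring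
    rw [lhs, sum4_swap] at h0
    rw [rhs]
    exact h0
  exact .of_dotProduct_mulVec_nonneg (herm_aux _ key) key
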